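/- Let K be a compact, perfectly normal topological space and X a real Banach space. A function f ∈ C(K,X) with ‖f‖ = 1 is a (ρ₊)-right symmetric point of C(K,X) if and only if exactly one of the following holds: (i) M_f = {k₀} for some k₀ ∈ K, the vector f(k₀) is a (ρ₊)-right symmetric point of X, and for every k ∈ K with k ≠ k₀, the only w ∈ X with w ⊥_{ρ₊} f(k) is w = 0; (ii) M_f contains at least two points and for every k ∈ K, the only w ∈ X with w ⊥_{ρ₊} f(k) is w = 0. -/

import Mathlib

open Filter Topology Set Metric NormedSpace

noncomputable section

/-- Birkhoff–James orthogonality: `x ⊥_B y` iff `‖x + t • y‖ ≥ ‖x‖` for all real `t`. -/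
def BJOrth {E : Type*} [NormedAddCommGroup E] [NormedSpace ℝ E] (x y : E) : Prop :=
  ∀ t : ℝ, ‖x‖ ≤ ‖x + t • y‖

/-- The norm derivative `ρ'₊(x,y) = ‖x‖ · lim_{t→0⁺} (‖x+ty‖-‖x‖)/t`. -/
def rhoPlus {E : Type*} [NormedAddCommGroup E] [NormedSpace ℝ E] (x y : E) : ℝ :=
  ‖x‖ * limUnder (𝓝[>] (0 : ℝ)) (fun t => (‖x + t • y‖ - ‖x‖) / t)

/-- The norm derivative `ρ'₋(x,y) = ‖x‖ · lim_{t→0⁻} (‖x+ty‖-‖x‖)/t`. -/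
def rhoMinus {E : Type*} [NormedAddCommGroup E] [NormedSpace ℝ E] (x y : E) : ℝ :=
  ‖x‖ * limUnder (𝓝[<] (0 : ℝ)) (fun t => (‖x + t • y‖ - ‖x‖) / t)

/-- The norm derivative `ρ'(x,y) = (ρ'₊(x,y) + ρ'₋(x,y))/2`. -/
def rhoDer {E : Type*} [NormedAddCommGroup E] [NormedSpace ℝ E] (x y : E) : ℝ :=
  (rhoPlus x y + rhoMinus x y) / 2

/-- `x` is an exposed point of the closed unit ball of `E`: there is a norm-one functional `f`
with `f x = 1` and `f u < 1` for every `u` in the ball with `u ≠ x`. -/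
def ExposedPt {E : Type*} [NormedAddCommGroup E] [NormedSpace ℝ E] (x : E) : Prop :=
  ‖x‖ ≤ 1 ∧ ∃ f : E →L[ℝ] ℝ, ‖f‖ = 1 ∧ f x = 1 ∧ ∀ u : E, ‖u‖ ≤ 1 → u ≠ x → f u < 1

namespace Stmt13Aux

variable {E : Type*} [NormedAddCommGroup E] [NormedSpace ℝ E]

/-- slope of the norm function -/
def sl (x y : E) (t : ℝ) : ℝ := (‖x + t • y‖ - ‖x‖) / t

/-- the right derivative value -/
def Dp (x y : E) : ℝ := sInf (sl x y '' Ioi 0)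

lemma sl_mono (x y : E) : MonotoneOn (sl x y) (Ioi (0:ℝ)) := by
  intro s hs t ht hst
  have hs0 : (0:ℝ) < s := hs
  have ht0 : (0:ℝ) < t := ht
  have key : t * ‖x + s • y‖ ≤ (t - s) * ‖x‖ + s * ‖x + t • y‖ := by
    have h1 : t • (x + s • y) = (t - s) • x + s • (x + t • y) := by module
    calc t * ‖x + s • y‖ = ‖t • (x + s • y)‖ := by
          rw [norm_smul, Real.norm_eq_abs, abs_of_pos ht0]
      _ = ‖(t - s) • x + s • (x + t • y)‖ := by rw [h1]
      _ ≤ ‖(t - s) • x‖ + ‖s • (x + t • y)‖ := norm_add_le _ _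
      _ = (t - s) * ‖x‖ + s * ‖x + t • y‖ := by
          rw [norm_smul, norm_smul, Real.norm_eq_abs, Real.norm_eq_abs,
            abs_of_nonneg (by linarith), abs_of_pos hs0]
  rw [sl, sl, div_le_div_iff₀ hs0 ht0]
  nlinarith

lemma neg_norm_le_sl (x y : E) {t : ℝ} (ht : 0 < t) : -‖y‖ ≤ sl x y t := by
  rw [sl, le_div_iff₀ ht]
  have h2 := norm_sub_norm_le x (x + t • y)
  have h3 : x - (x + t • y) = -(t • y) := by module
  rw [h3, norm_neg, norm_smul, Real.norm_eq_abs, abs_of_pos ht] at h2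
  nlinarith

lemma sl_le_norm (x y : E) {t : ℝ} (ht : 0 < t) : sl x y t ≤ ‖y‖ := by
  rw [sl, div_le_iff₀ ht]
  have := norm_add_le x (t • y)
  rw [norm_smul, Real.norm_eq_abs, abs_of_pos ht] at this
  nlinarith

lemma bddBelow_sl (x y : E) : BddBelow (sl x y '' Ioi 0) := by
  refine ⟨-‖y‖, ?_⟩
  rintro _ ⟨t, ht, rfl⟩
  exact neg_norm_le_sl x y ht

lemma Dp_le_sl (x y : E) {t : ℝ} (ht : 0 < t) : Dp x y ≤ sl x y t :=
  csInf_le (bddBelow_sl x y) ⟨t, ht, rfl⟩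

lemma le_Dp (x y : E) {c : ℝ} (h : ∀ t : ℝ, 0 < t → c ≤ sl x y t) : c ≤ Dp x y :=
  le_csInf ⟨sl x y 1, ⟨1, mem_Ioi.mpr one_pos, rfl⟩⟩ (by rintro _ ⟨t, ht, rfl⟩; exact h t ht)

lemma tendsto_sl (x y : E) : Tendsto (sl x y) (𝓝[>] 0) (𝓝 (Dp x y)) :=
  MonotoneOn.tendsto_nhdsGT (sl_mono x y) (bddBelow_sl x y)

lemma rhoPlus_eq (x y : E) : rhoPlus x y = ‖x‖ * Dp x y :=
  congrArg (‖x‖ * ·) ((tendsto_sl x y).limUnder_eq)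

lemma Dp_nonneg_of (x y : E) (h : ∀ t : ℝ, 0 < t → ‖x‖ ≤ ‖x + t • y‖) : 0 ≤ Dp x y :=
  le_Dp x y fun t ht => div_nonneg (by linarith [h t ht]) ht.le

lemma Dp_smul_self (x : E) {c : ℝ} (hc : 0 ≤ c) : Dp x (c • x) = c * ‖x‖ := by
  have h : ∀ t : ℝ, t ∈ Ioi (0:ℝ) → sl x (c • x) t = c * ‖x‖ := by
    intro t ht
    have ht0 : (0:ℝ) < t := ht
    rw [sl, smul_smul]
    have : x + (t * c) • x = (1 + t * c) • x := by module
    rw [this, norm_smul, Real.norm_eq_abs, abs_of_pos (by nlinarith)]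
    field_simp
    ring
  rw [Dp]
  have : sl x (c • x) '' Ioi 0 = {c * ‖x‖} := by
    apply Subset.antisymm
    · rintro _ ⟨t, ht, rfl⟩; exact h t ht
    · rintro _ rfl; exact ⟨1, mem_Ioi.mpr one_pos, h 1 (mem_Ioi.mpr one_pos)⟩
  rw [this, csInf_singleton]

lemma Dp_zero_right (x : E) : Dp x 0 = 0 := by
  have := Dp_smul_self x (le_refl 0)
  simpa using this


section CK
variable {K X : Type*} [TopologicalSpace K] [CompactSpace K]
  [NormedAddCommGroup X] [NormedSpace ℝ X]

lemma sl_point_le (g f : C(K, X)) {k : K} (hk : ‖g k‖ = ‖g‖) {t : ℝ} (ht : 0 < t) :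
    sl (g k) (f k) t ≤ sl g f t := by
  rw [sl, sl, div_le_div_iff_of_pos_right ht, hk]
  have h1 : ‖g k + t • f k‖ ≤ ‖g + t • f‖ := by
    have : g k + t • f k = (g + t • f) k := by simp
    rw [this]
    exact (g + t • f).norm_coe_le_norm k
  linarith

lemma form1 (g f : C(K, X)) {k : K} (hk : ‖g k‖ = ‖g‖) : Dp (g k) (f k) ≤ Dp g f :=
  le_Dp g f fun t ht => (Dp_le_sl _ _ ht).trans (sl_point_le g f hk ht)

lemma exists_max [Nonempty K] (g : C(K, X)) : ∃ k : K, ‖g k‖ = ‖g‖ := by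
  obtain ⟨k, -, hk⟩ := isCompact_univ.exists_isMaxOn univ_nonempty
    ((continuous_norm.comp g.continuous).continuousOn (s := Set.univ))
  refine ⟨k, le_antisymm (g.norm_coe_le_norm k) (g.norm_le (norm_nonneg _) |>.mpr ?_)⟩
  exact fun k' => hk (Set.mem_univ k')

lemma continuous_sl_eval (g f : C(K, X)) (t : ℝ) :
    Continuous (fun k : K => sl (g k) (f k) t) := by
  unfold sl
  fun_prop

lemma neg_norm_le_Dp (g f : C(K, X)) : -‖f‖ ≤ Dp g f :=
  le_Dp g f fun t ht => neg_norm_le_sl g f ht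

lemma key (g f : C(K, X)) (hg : g ≠ 0) :
    ∃ k : K, ‖g k‖ = ‖g‖ ∧ Dp (g k) (f k) = Dp g f := by
  have hgn : 0 < ‖g‖ := norm_pos_iff.mpr hg
  have hK : Nonempty K := by
    by_contra h
    rw [not_nonempty_iff] at h
    exact hg (ContinuousMap.ext fun k => isEmptyElim k)
  by_contra hcon
  push_neg at hcon
  set D := Dp g f with hD
  set M := {k : K | ‖g k‖ = ‖g‖} with hMdef
  have hMne : M.Nonempty := exists_max g
  have hMcl : IsClosed M := isClosed_eq (continuous_norm.comp g.continuous) continuous_const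
  have hMcomp : IsCompact M := hMcl.isCompact
  have hlt : ∀ k ∈ M, Dp (g k) (f k) < D := fun k hk =>
    lt_of_le_of_ne (form1 g f hk) (hcon k hk)
  -- choose t and ε for each point of M
  have hchoice : ∀ m : M, ∃ p : ℝ × ℝ, 0 < p.1 ∧ 0 < p.2 ∧
      sl (g m.1) (f m.1) p.1 < D - p.2 := by
    rintro ⟨m, hm⟩
    have h1 : Dp (g m) (f m) < D := hlt m hm
    have hne : (sl (g m) (f m) '' Set.Ioi 0).Nonempty :=
      ⟨_, ⟨1, Set.mem_Ioi.mpr one_pos, rfl⟩⟩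
    obtain ⟨_, ⟨t, ht, rfl⟩, hst⟩ := exists_lt_of_csInf_lt hne h1
    exact ⟨(t, (D - sl (g m) (f m) t) / 2), ht, by simpa using hst, by simp; linarith⟩
  choose p hp1 hp2 hp3 using hchoice
  set U : M → Set K := fun m => {k : K | sl (g k) (f k) (p m).1 < D - (p m).2} with hU
  have hUopen : ∀ m, IsOpen (U m) :=
    fun m => isOpen_Iio.preimage (continuous_sl_eval g f (p m).1)
  have hMsub : M ⊆ ⋃ m, U m := fun k hk => Set.mem_iUnion.mpr ⟨⟨k, hk⟩, hp3 ⟨k, hk⟩⟩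
  obtain ⟨s, hs⟩ := hMcomp.elim_finite_subcover U hUopen hMsub
  have hsne : s.Nonempty := by
    obtain ⟨k, hk⟩ := hMne
    obtain ⟨m, hm, -⟩ := Set.mem_iUnion₂.mp (hs hk)
    exact ⟨m, hm⟩
  set tst := s.inf' hsne (fun m => (p m).1) with htst
  set eps := s.inf' hsne (fun m => (p m).2) with heps
  have htst0 : 0 < tst := (Finset.lt_inf'_iff hsne).mpr (fun m _ => hp1 m)
  have heps0 : 0 < eps := (Finset.lt_inf'_iff hsne).mpr (fun m _ => hp2 m)
  -- the off-cover bound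
  set C := Set.univ \ ⋃ m ∈ s, U m with hC
  have hCcl : IsClosed C := isClosed_univ.sdiff (isOpen_biUnion (fun m _ => hUopen m))
  obtain ⟨δ, hδ0, hδlt, hδ⟩ : ∃ δ : ℝ, 0 ≤ δ ∧ δ < ‖g‖ ∧ ∀ k ∈ C, ‖g k‖ ≤ δ := by
    rcases Set.eq_empty_or_nonempty C with hCe | hCne
    · exact ⟨‖g‖ / 2, by linarith, by linarith, by simp [hCe]⟩
    · obtain ⟨km, hkm, hmax⟩ := hCcl.isCompact.exists_isMaxOn hCne
        ((continuous_norm.comp g.continuous).continuousOn)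
      refine ⟨‖g km‖, norm_nonneg _, ?_, fun k hk => hmax hk⟩
      have : km ∉ M := by
        intro h
        exact hkm.2 (hs h)
      exact lt_of_le_of_ne (g.norm_coe_le_norm km) this
  set B := ‖f‖ + |D| + eps + 1 with hB
  have hB0 : 0 < B := by positivity
  set t0 := min tst ((‖g‖ - δ) / B) with ht0def
  have ht00 : 0 < t0 := lt_min htst0 (div_pos (by linarith) hB0)
  -- pointwise bound
  have hpt : ∀ k : K, ‖(g + t0 • f) k‖ ≤ ‖g‖ + (D - eps) * t0 := by
    intro k
    have happ : (g + t0 • f) k = g k + t0 • f k := by simp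
    rw [happ]
    by_cases hk : k ∈ ⋃ m ∈ s, U m
    · obtain ⟨m, hm, hkm⟩ := Set.mem_iUnion₂.mp hk
      have h1 : sl (g k) (f k) t0 ≤ sl (g k) (f k) (p m).1 :=
        sl_mono (g k) (f k) (Set.mem_Ioi.mpr ht00)
          (Set.mem_Ioi.mpr (hp1 m)) ((min_le_left _ _).trans (Finset.inf'_le _ hm))
      have h2 : sl (g k) (f k) (p m).1 < D - (p m).2 := hkm
      have h3 : eps ≤ (p m).2 := Finset.inf'_le _ hm
      have h4 : sl (g k) (f k) t0 ≤ D - eps := by linarith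
      rw [sl, div_le_iff₀ ht00] at h4
      have h5 : ‖g k‖ ≤ ‖g‖ := g.norm_coe_le_norm k
      nlinarith
    · have hkC : k ∈ C := ⟨Set.mem_univ k, hk⟩
      have h1 : ‖g k + t0 • f k‖ ≤ δ + t0 * ‖f‖ := by
        calc ‖g k + t0 • f k‖ ≤ ‖g k‖ + ‖t0 • f k‖ := norm_add_le _ _
          _ ≤ δ + t0 * ‖f‖ := by
              have := f.norm_coe_le_norm k
              have h2 := hδ k hkC
              rw [norm_smul, Real.norm_eq_abs, abs_of_pos ht00]
              nlinarith
      have h2 : t0 ≤ (‖g‖ - δ) / B := min_le_right _ _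
      have h3 : t0 * B ≤ ‖g‖ - δ := by
        rw [← le_div_iff₀ hB0]; exact h2
      have h4 : ‖f‖ - D + eps ≤ B := by
        have := le_abs_self D
        have := neg_abs_le D
        simp only [hB]
        linarith
      nlinarith
  have hnn : 0 ≤ ‖g‖ + (D - eps) * t0 := by
    have h4 : ‖f‖ + eps ≤ B := by
      have := abs_nonneg D
      simp only [hB]; linarith
    have h5 : -‖f‖ ≤ D := neg_norm_le_Dp g f
    have h3 : t0 * B ≤ ‖g‖ - δ := by
      rw [← le_div_iff₀ hB0]; exact min_le_right _ _
    nlinarith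
  have hsl : sl g f t0 ≤ D - eps := by
    rw [sl, div_le_iff₀ ht00]
    have := (ContinuousMap.norm_le _ hnn).mpr hpt
    linarith
  have := Dp_le_sl g f ht00
  rw [← hD] at this
  linarith

end CK
section Construct
variable {K X : Type*} [TopologicalSpace K] [CompactSpace K] [T2Space K]
  [PerfectlyNormalSpace K] [NormedAddCommGroup X] [NormedSpace ℝ X]

lemma peak (k' : K) (A : Set K) (hA : IsOpen A) (hk' : k' ∈ A) :
    ∃ u : C(K, ℝ), (∀ k, u k ∈ Set.Icc (0:ℝ) 1) ∧ (∀ k, u k = 1 ↔ k = k') ∧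
      ∀ k ∉ A, u k = 0 := by
  obtain ⟨u, hs, h0, -, hr⟩ := exists_continuous_one_zero_of_isCompact_of_isGδ
    (isCompact_singleton : IsCompact {k'}) (PerfectlyNormalSpace.closed_gdelta isClosed_singleton)
    hA.isClosed_compl (Set.disjoint_singleton_left.mpr (by simpa using hk'))
  refine ⟨u, hr, fun k => ?_, fun k hk => h0 hk⟩
  constructor
  · intro h
    have : k ∈ u ⁻¹' {1} := h
    rw [← hs] at this
    simpa using this
  · intro h
    have : k' ∈ u ⁻¹' {1} := by rw [← hs]; exact rfl
    rw [h]
    simpa using this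

lemma not_rs (f : C(K, X)) (hf : ‖f‖ = 1) {k₁ k' : K} (h1 : ‖f k₁‖ = ‖f‖)
    (hne : k' ≠ k₁) {w : X} (hw : w ≠ 0) (how : rhoPlus w (f k') = 0) :
    ∃ g : C(K, X), rhoPlus g f = 0 ∧ rhoPlus f g ≠ 0 := by
  have hw0 : 0 < ‖w‖ := norm_pos_iff.mpr hw
  obtain ⟨A, B, hA, hB, hk'A, hk₁B, hAB⟩ := t2_separation hne
  obtain ⟨u, hur, hu1, hu0⟩ := peak k' A hA hk'A
  obtain ⟨v, hv0, hv1, hvr⟩ := exists_continuous_zero_one_of_isClosed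
    hB.isClosed_compl isClosed_singleton
    (Set.disjoint_compl_left_iff_subset.mpr (Set.singleton_subset_iff.mpr hk₁B))
  set ε : ℝ := ‖w‖ / 2 with hε
  have hε0 : 0 < ε := by positivity
  set g : C(K, X) := ⟨fun k => u k • w + (ε * v k) • f k,
    ((u.continuous.smul continuous_const).add
      ((continuous_const.mul v.continuous).smul f.continuous))⟩ with hgdef
  have huv : ∀ k : K, u k ≠ 0 → v k = 0 := by
    intro k hk
    have hkA : k ∈ A := by
      by_contra h
      exact hk (hu0 k h)
    have : k ∈ Bᶜ := fun hkB => (Set.disjoint_left.mp hAB hkA) hkB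
    exact hv0 this
  have hgk' : g k' = w := by
    have h1' : u k' = 1 := (hu1 k').mpr rfl
    have h2' : v k' = 0 := huv k' (by rw [h1']; norm_num)
    show u k' • w + (ε * v k') • f k' = w
    rw [h1', h2']
    simp
  have hlt : ∀ k : K, k ≠ k' → ‖g k‖ < ‖w‖ := by
    intro k hk
    show ‖u k • w + (ε * v k) • f k‖ < ‖w‖
    by_cases hu : u k = 0
    · rw [hu]
      simp only [zero_smul, zero_add]
      rw [norm_smul, Real.norm_eq_abs, abs_of_nonneg (mul_nonneg hε0.le (hvr k).1)]
      have hfk : ‖f k‖ ≤ 1 := hf ▸ f.norm_coe_le_norm k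
      have ha : ε * v k ≤ ε := mul_le_of_le_one_right hε0.le (hvr k).2
      have hb : ε * v k * ‖f k‖ ≤ ε * v k :=
        mul_le_of_le_one_right (mul_nonneg hε0.le (hvr k).1) hfk
      linarith
    · have hv : v k = 0 := huv k hu
      rw [hv, mul_zero, zero_smul, add_zero, norm_smul, Real.norm_eq_abs,
        abs_of_nonneg (hur k).1]
      have : u k < 1 := lt_of_le_of_ne (hur k).2 (fun h => hk ((hu1 k).mp h))
      nlinarith
  have hle : ∀ k : K, ‖g k‖ ≤ ‖w‖ := by
    intro k
    rcases eq_or_ne k k' with rfl | h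
    · rw [hgk']
    · exact (hlt k h).le
  have hnorm : ‖g‖ = ‖w‖ :=
    le_antisymm ((g.norm_le (norm_nonneg w)).mpr hle) (hgk' ▸ g.norm_coe_le_norm k')
  have hg0 : g ≠ 0 := by
    intro h
    rw [h, norm_zero] at hnorm
    exact hw (norm_eq_zero.mp hnorm.symm)
  have hMg : ∀ k : K, ‖g k‖ = ‖g‖ → k = k' := by
    intro k hk
    by_contra h
    have := hlt k h
    rw [hk, hnorm] at this
    exact lt_irrefl _ this
  refine ⟨g, ?_, ?_⟩
  · rw [rhoPlus_eq]
    obtain ⟨k, hk, hDk⟩ := key g f hg0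
    have hkk' : k = k' := hMg k hk
    subst hkk'
    rw [← hDk, hgk']
    have : Dp w (f k) = 0 := by
      rw [rhoPlus_eq] at how
      exact (mul_eq_zero.mp how).resolve_left (by positivity)
    rw [this, mul_zero]
  · have hgk₁ : g k₁ = ε • f k₁ := by
      have hu : u k₁ = 0 := hu0 k₁ (fun h => (Set.disjoint_left.mp hAB h) hk₁B)
      have hv : v k₁ = 1 := hv1 rfl
      show u k₁ • w + (ε * v k₁) • f k₁ = ε • f k₁
      rw [hu, hv, mul_one]
      simp
    have h2 : Dp (f k₁) (g k₁) ≤ Dp f g := form1 f g h1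
    have h3 : Dp (f k₁) (g k₁) = ε := by
      rw [hgk₁, Dp_smul_self (f k₁) hε0.le, h1, hf, mul_one]
    rw [rhoPlus_eq, hf, one_mul]
    intro h
    rw [h] at h2
    rw [h3] at h2
    linarith
end Construct

end Stmt13Aux

theorem stmt13 {K X : Type*} [TopologicalSpace K] [CompactSpace K] [T2Space K]
    [PerfectlyNormalSpace K]
    [NormedAddCommGroup X] [NormedSpace ℝ X] [CompleteSpace X]
    (f : C(K, X)) (hf : ‖f‖ = 1) :
    (∀ g : C(K, X), rhoPlus g f = 0 → rhoPlus f g = 0) ↔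
      ((∃ k₀ : K, {k : K | ‖f k‖ = ‖f‖} = {k₀} ∧
          (∀ y : X, rhoPlus y (f k₀) = 0 → rhoPlus (f k₀) y = 0) ∧
          (∀ k : K, k ≠ k₀ → ∀ w : X, rhoPlus w (f k) = 0 → w = 0)) ∨
        ((∃ k₁ k₂ : K, k₁ ≠ k₂ ∧ ‖f k₁‖ = ‖f‖ ∧ ‖f k₂‖ = ‖f‖) ∧
          (∀ k : K, ∀ w : X, rhoPlus w (f k) = 0 → w = 0))) := by
  open Stmt13Aux in
  have hfne : f ≠ 0 := by
    intro h
    rw [h, norm_zero] at hf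
    exact zero_ne_one hf
  have hK : Nonempty K := by
    by_contra h
    rw [not_nonempty_iff] at h
    exact hfne (ContinuousMap.ext fun k => isEmptyElim k)
  have hf1 : ∀ k : K, ‖f k‖ = ‖f‖ → ‖f k‖ ≠ 0 := by
    intro k hk
    rw [hk, hf]
    exact one_ne_zero
  constructor
  · -- forward direction
    intro hRS
    obtain ⟨k₀, hk₀⟩ := Stmt13Aux.exists_max f
    by_cases htwo : ∃ k₁ : K, ‖f k₁‖ = ‖f‖ ∧ k₁ ≠ k₀
    · right
      obtain ⟨k₁, hk₁, hk₁ne⟩ := htwo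
      refine ⟨⟨k₁, k₀, hk₁ne, hk₁, hk₀⟩, ?_⟩
      intro k w hw
      by_contra hwne
      obtain ⟨kk, hkk, hkne⟩ : ∃ kk : K, ‖f kk‖ = ‖f‖ ∧ k ≠ kk := by
        rcases eq_or_ne k k₀ with rfl | h
        · exact ⟨k₁, hk₁, hk₁ne.symm⟩
        · exact ⟨k₀, hk₀, h⟩
      obtain ⟨g, hg1, hg2⟩ := Stmt13Aux.not_rs f hf hkk hkne hwne hw
      exact hg2 (hRS g hg1)
    · left
      push_neg at htwo
      have hMeq : {k : K | ‖f k‖ = ‖f‖} = {k₀} := by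
        ext k
        simp only [Set.mem_setOf_eq, Set.mem_singleton_iff]
        exact ⟨fun h => htwo k h, fun h => h ▸ hk₀⟩
      refine ⟨k₀, hMeq, ?_, ?_⟩
      · intro y hy
        rcases eq_or_ne y 0 with rfl | hyne
        · rw [Stmt13Aux.rhoPlus_eq, Stmt13Aux.Dp_zero_right, mul_zero]
        · have hy0 : 0 < ‖y‖ := norm_pos_iff.mpr hyne
          obtain ⟨u, hur, hu1, -⟩ := Stmt13Aux.peak k₀ Set.univ isOpen_univ (Set.mem_univ _)
          set g : C(K, X) := ⟨fun k => u k • y, u.continuous.smul continuous_const⟩ with hgdef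
          have hgk₀ : g k₀ = y := by
            show u k₀ • y = y
            rw [(hu1 k₀).mpr rfl, one_smul]
          have hlt : ∀ k : K, k ≠ k₀ → ‖g k‖ < ‖y‖ := by
            intro k hk
            show ‖u k • y‖ < ‖y‖
            rw [norm_smul, Real.norm_eq_abs, abs_of_nonneg (hur k).1]
            have : u k < 1 := lt_of_le_of_ne (hur k).2 (fun h => hk ((hu1 k).mp h))
            nlinarith
          have hle : ∀ k : K, ‖g k‖ ≤ ‖y‖ := by
            intro k
            rcases eq_or_ne k k₀ with rfl | h
            · rw [hgk₀]
            · exact (hlt k h).le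
          have hnorm : ‖g‖ = ‖y‖ :=
            le_antisymm ((g.norm_le (norm_nonneg y)).mpr hle)
              (hgk₀ ▸ g.norm_coe_le_norm k₀)
          have hg0 : g ≠ 0 := by
            intro h
            rw [h, norm_zero] at hnorm
            exact hyne (norm_eq_zero.mp hnorm.symm)
          have hgf : rhoPlus g f = 0 := by
            rw [Stmt13Aux.rhoPlus_eq]
            obtain ⟨k, hk, hDk⟩ := Stmt13Aux.key g f hg0
            have hkk : k = k₀ := by
              by_contra h
              have := hlt k h
              rw [hk, hnorm] at this
              exact lt_irrefl _ this
            subst hkk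
            rw [← hDk, hgk₀]
            have : Stmt13Aux.Dp y (f k) = 0 := by
              rw [Stmt13Aux.rhoPlus_eq] at hy
              exact (mul_eq_zero.mp hy).resolve_left (by positivity)
            rw [this, mul_zero]
          have hfg := hRS g hgf
          rw [Stmt13Aux.rhoPlus_eq, hf, one_mul] at hfg
          obtain ⟨k, hk, hDk⟩ := Stmt13Aux.key f g hfne
          have hkk : k = k₀ := by
            have : k ∈ ({k₀} : Set K) := hMeq ▸ hk
            simpa using this
          subst hkk
          rw [hfg, hgk₀] at hDk
          rw [Stmt13Aux.rhoPlus_eq, hDk, mul_zero]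
      · intro k hkne w hw
        by_contra hwne
        obtain ⟨g, hg1, hg2⟩ := Stmt13Aux.not_rs f hf hk₀ hkne hwne hw
        exact hg2 (hRS g hg1)
  · -- reverse direction
    intro hyp g hg
    rcases eq_or_ne g 0 with rfl | hgne
    · have : f + (1:ℝ) • (0 : C(K, X)) = f := by simp
      rw [Stmt13Aux.rhoPlus_eq]
      have : Stmt13Aux.Dp f (0 : C(K, X)) = 0 := Stmt13Aux.Dp_zero_right f
      rw [this, mul_zero]
    · have hgn0 : ‖g‖ ≠ 0 := norm_ne_zero_iff.mpr hgne
      have hDg : Stmt13Aux.Dp g f = 0 := by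
        rw [Stmt13Aux.rhoPlus_eq] at hg
        exact (mul_eq_zero.mp hg).resolve_left hgn0
      obtain ⟨k, hk, hDk⟩ := Stmt13Aux.key g f hgne
      have hgk0 : g k ≠ 0 := by
        intro h
        rw [h, norm_zero] at hk
        exact hgn0 hk.symm
      have hortho : rhoPlus (g k) (f k) = 0 := by
        rw [Stmt13Aux.rhoPlus_eq, hDk, hDg, mul_zero]
      rcases hyp with ⟨k₀, hMeq, hsym, hoth⟩ | ⟨-, hall⟩
      · have hkk : k = k₀ := by
          by_contra h
          exact hgk0 (hoth k h (g k) hortho)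
        subst hkk
        have h2 := hsym (g k) hortho
        have hfk : ‖f k‖ = ‖f‖ := by
          have : k ∈ ({k} : Set K) := rfl
          rw [← hMeq] at this
          exact this
        have hDfk : Stmt13Aux.Dp (f k) (g k) = 0 := by
          rw [Stmt13Aux.rhoPlus_eq] at h2
          exact (mul_eq_zero.mp h2).resolve_left (hf1 k hfk)
        obtain ⟨k', hk', hDk'⟩ := Stmt13Aux.key f g hfne
        have hkk' : k' = k := by
          have : k' ∈ ({k} : Set K) := hMeq ▸ hk'
          simpa using this
        subst hkk'
        rw [Stmt13Aux.rhoPlus_eq, ← hDk', hDfk, mul_zero]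
      · exact absurd (hall k (g k) hortho) hgk0
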